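/- Suppose B is not contained in one of the two closed halfspaces induced by A, i.e., there exist b, b' ∈ B with ⟨b, u⟩ < 0 < ⟨b', u⟩. Then every DR sequence (x_n)_{n∈ℕ} with respect to (A, B) is bounded. -/

import Mathlib

open Filter
open scoped RealInnerProductSpace

lemma pyth_aux {X : Type*} [NormedAddCommGroup X] [InnerProductSpace ℝ X]
    (u : X) (hu : ‖u‖ = 1) (w : X) :
    ‖w‖^2 = ‖w - ⟪w, u⟫ • u‖^2 + ⟪w, u⟫^2 := by
  have h : ‖w - ⟪w, u⟫ • u‖^2 = ‖w‖^2 - 2*⟪w, u⟫^2 + ⟪w, u⟫^2 := by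
    rw [norm_sub_sq_real, real_inner_smul_right, norm_smul, hu]
    simp only [mul_one, Real.norm_eq_abs, sq_abs]; ring
  rw [h]; ring

/-- If `B` is not contained in one of the two closed halfspaces induced by
the hyperplane `A = {u}ᗮ` (i.e., there are `b, b' ∈ B` with `⟪b,u⟫ < 0 < ⟪b',u⟫`), then
every DR sequence with respect to `(A, B)` is bounded. -/
theorem dr_hyperplane_doubleton_stmt_3
    {X : Type*} [NormedAddCommGroup X] [InnerProductSpace ℝ X] [FiniteDimensional ℝ X]
    (u : X) (hu : ‖u‖ = 1)
    (B : Set X) (hB : B.Nonempty) (hBfin : B.Finite)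
    (hneg : ∃ b ∈ B, ⟪b, u⟫ < 0) (hpos : ∃ b' ∈ B, 0 < ⟪b', u⟫)
    (x : ℕ → X)
    (hx : ∀ n : ℕ, ∃ b ∈ B,
      (∀ b' ∈ B, ‖(x n - (2 * ⟪x n, u⟫) • u) - b‖ ≤ ‖(x n - (2 * ⟪x n, u⟫) • u) - b'‖) ∧
      x (n + 1) = ⟪x n, u⟫ • u + b) :
    ∃ M : ℝ, ∀ n : ℕ, ‖x n‖ ≤ M := by
  obtain ⟨bm, hbmB, hbm⟩ := hneg
  obtain ⟨bp, hbpB, hbp⟩ := hpos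
  -- uniform bound on B
  obtain ⟨K, hK⟩ : ∃ K : ℝ, ∀ b ∈ B, ‖b‖ ≤ K := by
    obtain ⟨K, hK⟩ := (hBfin.image (fun b => ‖b‖)).bddAbove
    exact ⟨K, fun b hb => hK (Set.mem_image_of_mem _ hb)⟩
  have hK0 : 0 ≤ K := le_trans (norm_nonneg _) (hK bm hbmB)
  have hinnK : ∀ b ∈ B, |⟪b, u⟫| ≤ K := by
    intro b hb
    calc |⟪b, u⟫| ≤ ‖b‖ * ‖u‖ := abs_real_inner_le_norm b u
    _ = ‖b‖ := by rw [hu, mul_one]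
    _ ≤ K := hK b hb
  have huu : ⟪u, u⟫ = (1:ℝ) := by
    rw [real_inner_self_eq_norm_sq, hu]; norm_num
  -- u-component recursion
  have hT : ∀ n, ∀ b : X, x (n + 1) = ⟪x n, u⟫ • u + b →
      ⟪x (n+1), u⟫ = ⟪x n, u⟫ + ⟪b, u⟫ := by
    intro n b hxe
    rw [hxe, inner_add_left, real_inner_smul_left, huu, mul_one]
  -- bound on tangential component of b - ⟪b,u⟫ u
  have hbtan : ∀ b ∈ B, ‖b - ⟪b, u⟫ • u‖ ≤ 2 * K := by
    intro b hb
    calc ‖b - ⟪b, u⟫ • u‖ ≤ ‖b‖ + ‖⟪b, u⟫ • u‖ := norm_sub_le _ _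
    _ = ‖b‖ + |⟪b, u⟫| := by rw [norm_smul, hu, mul_one, Real.norm_eq_abs]
    _ ≤ K + K := add_le_add (hK b hb) (hinnK b hb)
    _ = 2 * K := by ring
  set C : ℝ := max ‖x 0 - ⟪x 0, u⟫ • u‖ (2 * K) with hCdef
  have hC0 : 0 ≤ C := le_trans (norm_nonneg _) (le_max_left _ _)
  have htang : ∀ n, ‖x n - ⟪x n, u⟫ • u‖ ≤ C := by
    intro n
    cases n with
    | zero => exact le_max_left _ _
    | succ n =>
      obtain ⟨b, hbB, _, hxe⟩ := hx n
      have ht1 := hT n b hxe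
      have hveq : x (n+1) - ⟪x (n+1), u⟫ • u = b - ⟪b, u⟫ • u := by
        rw [ht1, hxe]; module
      rw [hveq]
      exact le_trans (hbtan b hbB) (le_max_right _ _)
  -- the key geometric estimate
  have hkey : ∀ n, ∀ b ∈ B, ∀ b' ∈ B,
      ‖(x n - (2 * ⟪x n, u⟫) • u) - b‖ ≤ ‖(x n - (2 * ⟪x n, u⟫) • u) - b'‖ →
      (⟪x n, u⟫ + ⟪b, u⟫)^2 ≤ (C + 2*K)^2 + (⟪x n, u⟫ + ⟪b', u⟫)^2 := by
    intro n b hbB b' hb'B hmin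
    set w := x n - (2 * ⟪x n, u⟫) • u with hw
    have hwu : ⟪w, u⟫ = -⟪x n, u⟫ := by
      rw [hw, inner_sub_left, real_inner_smul_left, huu]; ring
    have h1 : ⟪w - b, u⟫ = -(⟪x n, u⟫ + ⟪b, u⟫) := by
      rw [inner_sub_left, hwu]; ring
    have h2 : ⟪w - b', u⟫ = -(⟪x n, u⟫ + ⟪b', u⟫) := by
      rw [inner_sub_left, hwu]; ring
    have hsq : ‖w - b‖^2 ≤ ‖w - b'‖^2 :=
      pow_le_pow_left₀ (norm_nonneg _) hmin 2
    have hlow : (⟪x n, u⟫ + ⟪b, u⟫)^2 ≤ ‖w - b‖^2 := by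
      have hp := pyth_aux u hu (w - b)
      have h1sq : ⟪w - b, u⟫^2 = (⟪x n, u⟫ + ⟪b, u⟫)^2 := by rw [h1]; ring
      nlinarith [sq_nonneg ‖(w - b) - ⟪w - b, u⟫ • u‖]
    have htanv : (w - b') - ⟪w - b', u⟫ • u
        = (x n - ⟪x n, u⟫ • u) - (b' - ⟪b', u⟫ • u) := by
      rw [h2, hw]; module
    have hhigh : ‖w - b'‖^2 ≤ (C + 2*K)^2 + (⟪x n, u⟫ + ⟪b', u⟫)^2 := by
      have hp := pyth_aux u hu (w - b')
      have hnt : ‖(w - b') - ⟪w - b', u⟫ • u‖ ≤ C + 2*K := by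
        rw [htanv]
        calc ‖(x n - ⟪x n, u⟫ • u) - (b' - ⟪b', u⟫ • u)‖
            ≤ ‖x n - ⟪x n, u⟫ • u‖ + ‖b' - ⟪b', u⟫ • u‖ := norm_sub_le _ _
        _ ≤ C + 2*K := add_le_add (htang n) (hbtan b' hb'B)
      have h2sq : ⟪w - b', u⟫^2 = (⟪x n, u⟫ + ⟪b', u⟫)^2 := by rw [h2]; ring
      have hnt2 : ‖(w - b') - ⟪w - b', u⟫ • u‖^2 ≤ (C + 2*K)^2 :=
        pow_le_pow_left₀ (norm_nonneg _) hnt 2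
      linarith
    linarith
  -- thresholds
  set βm : ℝ := ⟪bm, u⟫ with hβm
  set βp : ℝ := ⟪bp, u⟫ with hβp
  set Tm : ℝ := ((C + 2*K)^2 + βm^2) / (2 * (-βm)) with hTm
  set Tp : ℝ := ((C + 2*K)^2 + βp^2) / (2 * βp) with hTp
  have hTm0 : 0 ≤ Tm := div_nonneg (by positivity) (by linarith)
  have hTp0 : 0 ≤ Tp := div_nonneg (by positivity) (by linarith)
  set T : ℝ := max Tm Tp with hTdef
  have hT0 : 0 ≤ T := le_trans hTm0 (le_max_left _ _)
  -- if t n > T then chosen b has negative inner product; if t n < -T, positive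
  have hchoose : ∀ n, ∀ b ∈ B,
      (∀ b' ∈ B, ‖(x n - (2 * ⟪x n, u⟫) • u) - b‖ ≤ ‖(x n - (2 * ⟪x n, u⟫) • u) - b'‖) →
      (T < ⟪x n, u⟫ → ⟪b, u⟫ < 0) ∧ (⟪x n, u⟫ < -T → 0 < ⟪b, u⟫) := by
    intro n b hbB hmin
    constructor
    · intro ht
      by_contra hcon
      push_neg at hcon
      have hk := hkey n b hbB bm hbmB (hmin bm hbmB)
      have htm : Tm < ⟪x n, u⟫ := lt_of_le_of_lt (le_max_left _ _) ht
      have htm' : Tm * (2 * (-βm)) = (C + 2*K)^2 + βm^2 := by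
        rw [hTm]; exact div_mul_cancel₀ _ (ne_of_gt (by linarith))
      nlinarith [sq_nonneg (⟪x n, u⟫ + ⟪b, u⟫), hT0]
    · intro ht
      by_contra hcon
      push_neg at hcon
      have hk := hkey n b hbB bp hbpB (hmin bp hbpB)
      have htp : ⟪x n, u⟫ < -Tp := lt_of_lt_of_le ht (by
        have := le_max_right Tm Tp; linarith)
      have htp' : Tp * (2 * βp) = (C + 2*K)^2 + βp^2 := by
        rw [hTp]; exact div_mul_cancel₀ _ (ne_of_gt (by linarith))
      nlinarith [sq_nonneg (⟪x n, u⟫ + ⟪b, u⟫), hT0]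
  -- bound on |⟪x n, u⟫| by induction
  set M : ℝ := max |⟪x 0, u⟫| (T + K) with hMdef
  have hMK : K ≤ M := le_trans (by linarith) (le_max_right _ _)
  have hMT : T + K ≤ M := le_max_right _ _
  have habs : ∀ n, |⟪x n, u⟫| ≤ M := by
    intro n
    induction n with
    | zero => exact le_max_left _ _
    | succ n ih =>
      obtain ⟨b, hbB, hmin, hxe⟩ := hx n
      have ht1 := hT n b hxe
      have hbK : |⟪b, u⟫| ≤ K := hinnK b hbB
      obtain ⟨hc1, hc2⟩ := hchoose n b hbB hmin
      rw [abs_le] at ih ⊢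
      rw [abs_le] at hbK
      constructor
      · rcases le_or_gt ⟪x n, u⟫ (-T) with h | h
        · rcases lt_or_ge ⟪x n, u⟫ (-T) with h' | h'
          · have := hc2 h'
            rw [ht1]; linarith
          · rw [ht1]; linarith
        · rw [ht1]; linarith
      · rcases le_or_gt T ⟪x n, u⟫ with h | h
        · rcases lt_or_ge T ⟪x n, u⟫ with h' | h'
          · have := hc1 h'
            rw [ht1]; linarith
          · rw [ht1]; linarith
        · rw [ht1]; linarith
  refine ⟨C + M, fun n => ?_⟩
  calc ‖x n‖ = ‖(x n - ⟪x n, u⟫ • u) + ⟪x n, u⟫ • u‖ := by rw [sub_add_cancel]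
  _ ≤ ‖x n - ⟪x n, u⟫ • u‖ + ‖⟪x n, u⟫ • u‖ := norm_add_le _ _
  _ ≤ C + |⟪x n, u⟫| := by
      rw [norm_smul, hu, mul_one, Real.norm_eq_abs]
      exact add_le_add_left (htang n) _
  _ ≤ C + M := add_le_add_right (habs n) _
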